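/- For an integrable random variable U and a real random variable T: E[U | T] = 0 almost surely if and only if E[U · 𝟙(T ≤ t)] = 0 for all t ∈ ℝ. -/

import Mathlib

open MeasureTheory

/-- `E[U | T] = 0` a.s. iff `E[U · 𝟙(T ≤ t)] = 0` for all `t ∈ ℝ`. -/
theorem stmt4 {Ω : Type*} [MeasurableSpace Ω] (μ : Measure Ω) [IsProbabilityMeasure μ]
    (U : Ω → ℝ) (T : Ω → ℝ) (hU : Integrable U μ) (hT : Measurable T) :
    (μ[U | MeasurableSpace.comap T Real.measurableSpace] =ᵐ[μ] 0) ↔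
      ∀ t : ℝ, ∫ ω, U ω * (if T ω ≤ t then (1 : ℝ) else 0) ∂μ = 0 := by
  have hm : MeasurableSpace.comap T Real.measurableSpace ≤ ‹MeasurableSpace Ω› :=
    hT.comap_le
  haveI : SigmaFinite (μ.trim hm) := inferInstance
  have hind : ∀ t : ℝ, (∫ ω, U ω * (if T ω ≤ t then (1 : ℝ) else 0) ∂μ)
      = ∫ ω in T ⁻¹' Set.Iic t, U ω ∂μ := by
    intro t
    rw [← integral_indicator (hT measurableSet_Iic)]
    congr 1
    funext ω
    by_cases hω : T ω ≤ t <;> simp [Set.indicator_apply, Set.mem_preimage, Set.mem_Iic, hω]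
  have hmem : ∀ t : ℝ, MeasurableSet[MeasurableSpace.comap T Real.measurableSpace] (T ⁻¹' Set.Iic t) := fun t =>
    ⟨Set.Iic t, measurableSet_Iic, rfl⟩
  constructor
  · intro h t
    rw [hind t, ← setIntegral_condExp hm hU (hmem t)]
    calc ∫ ω in T ⁻¹' Set.Iic t, (μ[U|MeasurableSpace.comap T Real.measurableSpace]) ω ∂μ
        = ∫ ω in T ⁻¹' Set.Iic t, (0 : ℝ) ∂μ :=
          setIntegral_congr_ae (hm _ (hmem t)) (h.mono fun ω hω _ => hω)
      _ = 0 := by simp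
  · intro h
    -- total integral of U is zero
    have htot : ∫ ω, U ω ∂μ = 0 := by
      have hmono : Monotone fun n : ℕ => T ⁻¹' Set.Iic (n : ℝ) := by
        intro a b hab ω hω
        simp only [Set.mem_preimage, Set.mem_Iic] at hω ⊢
        exact le_trans hω (Nat.cast_le.mpr hab)
      have hunion : (⋃ n : ℕ, T ⁻¹' Set.Iic (n : ℝ)) = Set.univ := by
        ext ω
        simp only [Set.mem_iUnion, Set.mem_preimage, Set.mem_Iic, Set.mem_univ, iff_true]
        exact exists_nat_ge (T ω)
      have htend := tendsto_setIntegral_of_monotone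
        (fun n : ℕ => hT measurableSet_Iic) hmono
        (by rw [hunion]; exact hU.integrableOn)
      rw [hunion, Measure.restrict_univ] at htend
      have hzero : (fun n : ℕ => ∫ ω in T ⁻¹' Set.Iic (n : ℝ), U ω ∂μ)
          = fun _ => (0 : ℝ) := by
        funext n
        rw [← hind]
        exact h _
      rw [hzero] at htend
      exact tendsto_nhds_unique htend tendsto_const_nhds
    -- vanishing on every m-measurable set, via Dynkin's π-λ theorem
    have hgen : MeasurableSpace.comap T Real.measurableSpace
        = MeasurableSpace.generateFrom (Set.preimage T '' Set.range Set.Iic) := by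
      conv_lhs => rw [show (Real.measurableSpace : MeasurableSpace ℝ) = borel ℝ from rfl,
        borel_eq_generateFrom_Iic ℝ]
      exact MeasurableSpace.comap_generateFrom
    have hzero_set : ∀ s : Set Ω, MeasurableSet[MeasurableSpace.comap T Real.measurableSpace] s → ∫ ω in s, U ω ∂μ = 0 := by
      intro s hs
      refine MeasurableSpace.induction_on_inter (C := fun s _ => ∫ ω in s, U ω ∂μ = 0)
        (s := Set.preimage T '' Set.range Set.Iic) (m := MeasurableSpace.comap T Real.measurableSpace) hgen
        (isPiSystem_Iic.comap T) ?_ ?_ ?_ ?_ s hs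
      · simp
      · rintro t ⟨u, ⟨a, rfl⟩, rfl⟩
        rw [← hind]
        exact h a
      · intro t htm ht
        have := integral_add_compl (hm t htm) hU
        rw [ht, htot] at this
        linarith
      · intro f hdisj hfm hf
        have hsum := hasSum_integral_iUnion (fun i => hm _ (hfm i)) hdisj
          (hU.integrableOn)
        simp only [hf] at hsum
        exact hsum.unique hasSum_zero
    have := ae_eq_condExp_of_forall_setIntegral_eq (f := U) (g := fun _ => (0 : ℝ)) hm hU
      (fun s _ _ => integrableOn_zero)
      (fun s hs _ => by simp [hzero_set s hs])
      (stronglyMeasurable_zero.aestronglyMeasurable)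
    filter_upwards [this] with ω hω
    exact hω.symm
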